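/- Let C be cocomplete and cowellpowered with an (E,M)-factorisation system in which E consists of epimorphisms, let Σ be a varietor on C preserving E-cointersections, and let A = (Q,δ,i,o) be a Σ-tree automaton with o ∈ E. Then A is minimal if and only if A is simple and reachable. -/

import Mathlib

open CategoryTheory CategoryTheory.Limits

universe v u

namespace TreeAutPaper

variable {C : Type u} [Category.{v} C]

/-- A representative of a quotient of `X` lying in the class `E`:
an epimorphism out of `X` belonging to `E`. -/
structure EQuot (E : MorphismProperty C) (X : C) where
  obj : C
  hom : X ⟶ obj
  epi : Epi hom
  mem : E hom

/-- The order on quotients: `q ≤ r` iff `r = h ∘ q` for some `h`. -/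
def EQuot.le {E : MorphismProperty C} {X : C} (q r : EQuot E X) : Prop :=
  ∃ h : q.obj ⟶ r.obj, q.hom ≫ h = r.hom

/-- Two quotient representatives are equivalent when each is below the other. -/
def EQuot.equiv {E : MorphismProperty C} {X : C} (q r : EQuot E X) : Prop :=
  q.le r ∧ r.le q

/-- `C` is cowellpowered: quotients (epimorphisms out of an object, up to equivalence)
of every object form a set (an essentially `v`-small collection). -/
def Cowellpowered (C : Type u) [Category.{v} C] : Prop :=
  ∀ X : C, Small.{v} (Quot (fun q r : EQuot (⊤ : MorphismProperty C) X => EQuot.equiv q r))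

/-- An `(E,M)`-factorisation system: both classes are closed under composition with
isomorphisms, every morphism factors as an `E`-morphism followed by an `M`-morphism, and
we have a unique diagonal fill-in property. -/
structure IsFactorizationSystem (E M : MorphismProperty C) : Prop where
  respectsIso_E : E.RespectsIso
  respectsIso_M : M.RespectsIso
  factor : ∀ {X Y : C} (f : X ⟶ Y), ∃ (Z : C) (e : X ⟶ Z) (m : Z ⟶ Y), E e ∧ M m ∧ e ≫ m = f
  diag : ∀ {A B X Y : C} (e : A ⟶ B) (m : X ⟶ Y) (f : A ⟶ X) (g : B ⟶ Y),
    E e → M m → f ≫ m = e ≫ g → ∃! d : B ⟶ X, e ≫ d = f ∧ d ≫ m = g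

/-- `S` preserves `E`-cointersections, i.e. wide pushouts of families of epimorphisms
lying in `E`. -/
def PreservesECointersections (E : MorphismProperty C) (S : C ⥤ C) : Prop :=
  ∀ (J : Type (max u v)) (X : C) (objs : J → C) (arrows : ∀ j : J, X ⟶ objs j),
    (∀ j, E (arrows j)) → (∀ j, Epi (arrows j)) →
    ∀ c : Cocone (WidePushoutShape.wideSpan X objs arrows),
      Nonempty (IsColimit c) → Nonempty (IsColimit (S.mapCocone c))

/-- `f : ΣX ⟶ Y` factors through (the image under `Σ` of) the quotient `q`. -/
def FactorsThru {E : MorphismProperty C} (S : C ⥤ C) {X Y : C} (f : S.obj X ⟶ Y)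
    (q : EQuot E X) : Prop :=
  ∃ g : S.obj q.obj ⟶ Y, S.map q.hom ≫ g = f

/-- `q` is the `E`-cobase of `f : ΣX ⟶ Y`: the greatest quotient of `X` in `E`
through whose `Σ`-image `f` factors. -/
def IsCobase (E : MorphismProperty C) (S : C ⥤ C) {X Y : C} (f : S.obj X ⟶ Y)
    (q : EQuot E X) : Prop :=
  FactorsThru S f q ∧ ∀ r : EQuot E X, FactorsThru S f r → r.le q

variable (Sg : C ⥤ C)

/-- A `Σ`-tree automaton over input object `I` and output object `O`. -/
structure TreeAut (I O : C) where
  Q : Endofunctor.Algebra Sg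
  i : I ⟶ Q.a
  o : Q.a ⟶ O

variable {Sg} {I O : C}

/-- `h` is a homomorphism of automata from `A` to `B`. -/
structure IsAutHom (A B : TreeAut Sg I O) (h : A.Q.a ⟶ B.Q.a) : Prop where
  alg : Sg.map h ≫ B.Q.str = A.Q.str ≫ h
  hi : A.i ≫ h = B.i
  ho : h ≫ B.o = A.o

/-- `(B, q)` is a quotient automaton of `A`: `q` is an epimorphism lying in `E`
which is a homomorphism of automata. -/
structure IsQuotAut (E : MorphismProperty C) (A B : TreeAut Sg I O)
    (q : A.Q.a ⟶ B.Q.a) : Prop where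
  isHom : IsAutHom A B q
  epi : Epi q
  mem : E q

/-- `(M, qm)` is the minimisation of `A`: a quotient automaton through which every
quotient automaton of `A` factors by a (necessarily unique) automaton homomorphism. -/
def IsMinimisation (E : MorphismProperty C) (A M : TreeAut Sg I O)
    (qm : A.Q.a ⟶ M.Q.a) : Prop :=
  IsQuotAut E A M qm ∧
    ∀ (B : TreeAut Sg I O) (q' : A.Q.a ⟶ B.Q.a), IsQuotAut E A B q' →
      ∃! h : B.Q.a ⟶ M.Q.a, IsAutHom B M h ∧ q' ≫ h = qm

/-- `A` is simple: every quotient automaton of `A` has its quotient map an isomorphism. -/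
def IsSimple (E : MorphismProperty C) (A : TreeAut Sg I O) : Prop :=
  ∀ (B : TreeAut Sg I O) (q : A.Q.a ⟶ B.Q.a), IsQuotAut E A B q → IsIso q

section Varietor

variable (Fr : C ⥤ Endofunctor.Algebra Sg) (adj : Fr ⊣ Endofunctor.Algebra.forget Sg)

/-- The reachability map of an automaton: the underlying morphism of the adjoint
transpose of the initial-state assignment. -/
def rch (A : TreeAut Sg I O) : (Fr.obj I).a ⟶ A.Q.a :=
  ((adj.homEquiv I A.Q).symm A.i).f

/-- The language of an automaton. -/
def lang (A : TreeAut Sg I O) : (Fr.obj I).a ⟶ O :=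
  rch Fr adj A ≫ A.o

/-- The automaton `(Σ◇I, α_I, η_I, L)` on the free `Σ`-algebra over `I`. -/
def freeAut (L : (Fr.obj I).a ⟶ O) : TreeAut Sg I O :=
  { Q := Fr.obj I
    i := adj.unit.app I
    o := L }

/-- `A` is reachable: its reachability map lies in `E`. -/
def Reachable (E : MorphismProperty C) (A : TreeAut Sg I O) : Prop :=
  E (rch Fr adj A)

/-- `A` is minimal: reachable, and every reachable automaton with the same language
admits a (necessarily unique) automaton homomorphism into `A`. -/
def Minimal (E : MorphismProperty C) (A : TreeAut Sg I O) : Prop :=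
  Reachable Fr adj E A ∧
    ∀ B : TreeAut Sg I O, Reachable Fr adj E B → lang Fr adj B = lang Fr adj A →
      ∃! h : B.Q.a ⟶ A.Q.a, IsAutHom B A h

end Varietor



section Aux

/-- In an `(E,M)`-factorisation system, `E` is closed under composition. -/
lemma E_comp {E M : MorphismProperty C} (hfs : IsFactorizationSystem E M)
    {X Y Z : C} {e₁ : X ⟶ Y} {e₂ : Y ⟶ Z} (h₁ : E e₁) (h₂ : E e₂) : E (e₁ ≫ e₂) := by
  haveI := hfs.respectsIso_E
  obtain ⟨W, e, m, he, hm, hem⟩ := hfs.factor (e₁ ≫ e₂)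
  obtain ⟨d₁, ⟨hd₁e, hd₁m⟩, -⟩ := hfs.diag e₁ m e e₂ h₁ hm (by rw [hem])
  obtain ⟨d₂, ⟨hd₂e, hd₂m⟩, -⟩ := hfs.diag e₂ m d₁ (𝟙 Z) h₂ hm (by rw [hd₁m, Category.comp_id])
  obtain ⟨d₀, -, huniq⟩ := hfs.diag e m e m he hm rfl
  haveI : IsIso m := by
    refine ⟨d₂, ?_, hd₂m⟩
    have h1 : m ≫ d₂ = d₀ := huniq _ ⟨by
      rw [← Category.assoc, hem, Category.assoc, hd₂e, hd₁e], by
      rw [Category.assoc, hd₂m, Category.comp_id]⟩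
    have h2 : 𝟙 W = d₀ := huniq _ ⟨Category.comp_id e, Category.id_comp m⟩
    rw [h1, ← h2]
  rw [← hem]
  exact MorphismProperty.RespectsIso.postcomp E m e he

variable {Sg : C ⥤ C} (Fr : C ⥤ Endofunctor.Algebra Sg)
  (adj : Fr ⊣ Endofunctor.Algebra.forget Sg) {I O : C}

/-- Reachability maps are natural with respect to automaton homomorphisms. -/
lemma rch_hom (A B : TreeAut Sg I O) (h : A.Q.a ⟶ B.Q.a)
    (halg : Sg.map h ≫ B.Q.str = A.Q.str ≫ h) (hi : A.i ≫ h = B.i) :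
    rch Fr adj A ≫ h = rch Fr adj B := by
  have key := adj.homEquiv_naturality_right_symm (A.i) (⟨h, halg⟩ : A.Q ⟶ B.Q)
  have : rch Fr adj B = rch Fr adj A ≫ h := by
    unfold rch
    rw [← hi]
    exact congrArg Endofunctor.Algebra.Hom.f key
  exact this.symm

/-- The key existence result: if `A` is simple and reachable, then any reachable
automaton with the same language admits a homomorphism into `A`. -/
lemma exists_hom_of_simple [HasColimits C] {E M : MorphismProperty C}
    (hfs : IsFactorizationSystem E M)
    (hE : ∀ ⦃X Y : C⦄ (f : X ⟶ Y), E f → Epi f)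
    (hpres : PreservesECointersections E Sg)
    (A B : TreeAut Sg I O)
    (hA : E (rch Fr adj A)) (hB : E (rch Fr adj B))
    (hlang : lang Fr adj B = lang Fr adj A)
    (hsimple : IsSimple E A) :
    ∃ h : B.Q.a ⟶ A.Q.a, IsAutHom B A h := by
  haveI := hE _ hA
  haveI := hE _ hB
  set X := (Fr.obj I).a with hX
  set rA := rch Fr adj A with hrA
  set rB := rch Fr adj B with hrB
  -- the wide-span presentation of the pushout
  set J : Type (max u v) := ULift.{max u v} Bool with hJ
  set objs : J → C := fun j => cond j.down A.Q.a B.Q.a with hobjs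
  set arrows : ∀ j : J, X ⟶ objs j := fun j =>
    match j with
    | ⟨true⟩ => rA
    | ⟨false⟩ => rB
    with harrows
  have hEarr : ∀ j, E (arrows j) := fun j =>
    match j with
    | ⟨true⟩ => hA
    | ⟨false⟩ => hB
  have hEpiarr : ∀ j, Epi (arrows j) := fun j =>
    match j with
    | ⟨true⟩ => hE _ hA
    | ⟨false⟩ => hE _ hB
  let c : Cocone (WidePushoutShape.wideSpan X objs arrows) :=
    WidePushoutShape.mkCocone (rA ≫ pushout.inl rA rB)
      (fun j => match j with
        | ⟨true⟩ => pushout.inl rA rB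
        | ⟨false⟩ => pushout.inr rA rB)
      (by
        rintro ⟨b⟩
        cases b
        · show rB ≫ pushout.inr rA rB = rA ≫ pushout.inl rA rB
          exact pushout.condition.symm
        · show rA ≫ pushout.inl rA rB = rA ≫ pushout.inl rA rB
          rfl)
  have hcolim : IsColimit c := by
    refine
      { desc := fun s => pushout.desc (s.ι.app (some ⟨true⟩)) (s.ι.app (some ⟨false⟩)) ?_
        fac := fun s j => ?_
        uniq := fun s m hm => ?_ }
    · have h1 := s.w (WidePushoutShape.Hom.init (⟨true⟩ : J))
      have h2 := s.w (WidePushoutShape.Hom.init (⟨false⟩ : J))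
      exact h1.trans h2.symm
    · match j with
      | none =>
        show (rA ≫ pushout.inl rA rB) ≫ _ = s.ι.app none
        erw [Category.assoc, pushout.inl_desc]
        exact s.w (WidePushoutShape.Hom.init (⟨true⟩ : J))
      | some ⟨true⟩ =>
        show pushout.inl rA rB ≫ _ = _
        exact pushout.inl_desc _ _ _
      | some ⟨false⟩ =>
        show pushout.inr rA rB ≫ _ = _
        exact pushout.inr_desc _ _ _
    · apply pushout.hom_ext
      · erw [pushout.inl_desc]
        exact hm (some ⟨true⟩)
      · erw [pushout.inr_desc]
        exact hm (some ⟨false⟩)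
  obtain ⟨hSc⟩ := hpres J X objs arrows hEarr hEpiarr c ⟨hcolim⟩
  -- algebra morphism facts for the reachability maps
  have hAalg : Sg.map rA ≫ A.Q.str = (Fr.obj I).str ≫ rA :=
    ((adj.homEquiv I A.Q).symm A.i).h
  have hBalg : Sg.map rB ≫ B.Q.str = (Fr.obj I).str ≫ rB :=
    ((adj.homEquiv I B.Q).symm B.i).h
  -- the algebra structure on the pushout
  let c₂ : Cocone (WidePushoutShape.wideSpan X objs arrows ⋙ Sg) :=
    WidePushoutShape.mkCocone ((Fr.obj I).str ≫ rA ≫ pushout.inl rA rB)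
      (fun j => match j with
        | ⟨true⟩ => A.Q.str ≫ pushout.inl rA rB
        | ⟨false⟩ => B.Q.str ≫ pushout.inr rA rB)
      (by
        rintro ⟨b⟩
        cases b
        · show Sg.map rB ≫ B.Q.str ≫ pushout.inr rA rB = (Fr.obj I).str ≫ rA ≫ pushout.inl rA rB
          rw [← Category.assoc, hBalg, Category.assoc, ← pushout.condition]
        · show Sg.map rA ≫ A.Q.str ≫ pushout.inl rA rB = (Fr.obj I).str ≫ rA ≫ pushout.inl rA rB
          rw [← Category.assoc, hAalg, Category.assoc])
  have hδl : Sg.map (pushout.inl rA rB) ≫ hSc.desc c₂ = A.Q.str ≫ pushout.inl rA rB :=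
    hSc.fac c₂ (some ⟨true⟩)
  have hδr : Sg.map (pushout.inr rA rB) ≫ hSc.desc c₂ = B.Q.str ≫ pushout.inr rA rB :=
    hSc.fac c₂ (some ⟨false⟩)
  have oeq : rA ≫ A.o = rB ≫ B.o := hlang.symm
  set PQ : Endofunctor.Algebra Sg := ⟨pushout rA rB, hSc.desc c₂⟩ with hPQ
  set Paut : TreeAut Sg I O := ⟨PQ, A.i ≫ pushout.inl rA rB, pushout.desc A.o B.o oeq⟩ with hPaut
  -- the two injections agree on initial states
  have hieq : A.i ≫ pushout.inl rA rB = B.i ≫ pushout.inr rA rB := by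
    have e1 := adj.homEquiv_naturality_right_symm A.i (⟨pushout.inl rA rB, hδl⟩ : A.Q ⟶ PQ)
    have e2 := adj.homEquiv_naturality_right_symm B.i (⟨pushout.inr rA rB, hδr⟩ : B.Q ⟶ PQ)
    have e3 : (adj.homEquiv I A.Q).symm A.i ≫ (⟨pushout.inl rA rB, hδl⟩ : A.Q ⟶ PQ)
        = (adj.homEquiv I B.Q).symm B.i ≫ (⟨pushout.inr rA rB, hδr⟩ : B.Q ⟶ PQ) := by
      apply Endofunctor.Algebra.Hom.ext
      exact pushout.condition
    exact (adj.homEquiv I PQ).symm.injective (e1.trans (e3.trans e2.symm))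
  -- `inl` lies in `E`, by the diagonal fill-in property
  have llp : ∀ {Z W : C} (m : Z ⟶ W) (f : A.Q.a ⟶ Z) (g : pushout rA rB ⟶ W), M m →
      f ≫ m = pushout.inl rA rB ≫ g →
      ∃ d : pushout rA rB ⟶ Z, pushout.inl rA rB ≫ d = f ∧ d ≫ m = g := by
    intro Z W m f g hm hsq
    obtain ⟨d', ⟨hd'1, hd'2⟩, -⟩ := hfs.diag rB m (rA ≫ f) (pushout.inr rA rB ≫ g) hB hm (by
      rw [Category.assoc, hsq, ← Category.assoc, ← Category.assoc, pushout.condition])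
    refine ⟨pushout.desc f d' hd'1.symm, pushout.inl_desc _ _ _, ?_⟩
    apply pushout.hom_ext
    · rw [← Category.assoc, pushout.inl_desc, hsq]
    · rw [← Category.assoc, pushout.inr_desc, hd'2]
  have hinlE : E (pushout.inl rA rB) := by
    haveI := hfs.respectsIso_E
    obtain ⟨W, e, m, he, hm, hem⟩ := hfs.factor (pushout.inl rA rB)
    obtain ⟨d, hd1, hd2⟩ := llp m e (𝟙 _) hm (by rw [Category.comp_id, hem])
    obtain ⟨d₀, -, huniq⟩ := hfs.diag e m e m he hm rfl
    haveI : IsIso m := by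
      refine ⟨d, ?_, hd2⟩
      have h1 : m ≫ d = d₀ := huniq _ ⟨by rw [← Category.assoc, hem, hd1], by
        rw [Category.assoc, hd2, Category.comp_id]⟩
      have h2 : 𝟙 W = d₀ := huniq _ ⟨Category.comp_id e, Category.id_comp m⟩
      rw [h1, ← h2]
    rw [← hem]
    exact MorphismProperty.RespectsIso.postcomp E m e he
  have hquot : IsQuotAut E A Paut (pushout.inl rA rB) :=
    ⟨⟨hδl, rfl, pushout.inl_desc _ _ _⟩, hE _ hinlE, hinlE⟩
  haveI : IsIso (pushout.inl rA rB) := hsimple Paut (pushout.inl rA rB) hquot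
  haveI : IsIso (Sg.map (pushout.inl rA rB)) := inferInstance
  haveI : Epi (Sg.map (pushout.inl rA rB)) := IsIso.epi_of_iso _
  haveI : @IsIso _ _ A.Q.a c₂.pt (pushout.inl rA rB) := by assumption
  -- the desired homomorphism
  refine ⟨pushout.inr rA rB ≫ inv (pushout.inl rA rB), ?_, ?_, ?_⟩
  · have hinvalg : Sg.map (inv (pushout.inl rA rB)) ≫ A.Q.str
        = hSc.desc c₂ ≫ inv (pushout.inl rA rB) := by
      erw [← cancel_epi (Sg.map (pushout.inl rA rB)), ← Category.assoc, ← Sg.map_comp,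
        IsIso.hom_inv_id, Sg.map_id, Category.id_comp, ← Category.assoc, hδl, Category.assoc,
        IsIso.hom_inv_id, Category.comp_id]
    erw [Sg.map_comp, Category.assoc, hinvalg, ← Category.assoc, hδr, Category.assoc]
    rfl
  · rw [← Category.assoc, ← hieq, Category.assoc, IsIso.hom_inv_id, Category.comp_id]
  · have h2 : inv (pushout.inl rA rB) ≫ A.o = pushout.desc A.o B.o oeq := by
      rw [IsIso.inv_comp_eq, pushout.inl_desc]
    rw [Category.assoc, h2]
    exact pushout.inr_desc _ _ _

end Aux

/-- Let `Σ` be a varietor preserving `E`-cointersections and let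
`A = (Q,δ,i,o)` be a `Σ`-tree automaton with `o ∈ E`. Then `A` is minimal iff `A` is
simple and reachable. -/
theorem minimal_iff_simple_and_reachable
    {C : Type u} [Category.{v} C] [HasColimits C] (hcwp : Cowellpowered C)
    (E M : MorphismProperty C) (hfs : IsFactorizationSystem E M)
    (hE : ∀ ⦃X Y : C⦄ (f : X ⟶ Y), E f → Epi f)
    {Sg : C ⥤ C} (Fr : C ⥤ Endofunctor.Algebra Sg)
    (adj : Fr ⊣ Endofunctor.Algebra.forget Sg)
    (hpres : PreservesECointersections E Sg)
    {I O : C} (A : TreeAut Sg I O) (hoE : E A.o) :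
    Minimal Fr adj E A ↔ IsSimple E A ∧ Reachable Fr adj E A := by
  constructor
  · rintro ⟨hreach, huniv⟩
    refine ⟨?_, hreach⟩
    intro B q hq
    have hqrch : rch Fr adj A ≫ q = rch Fr adj B :=
      rch_hom Fr adj A B q hq.isHom.alg hq.isHom.hi
    have hBreach : Reachable Fr adj E B := by
      unfold Reachable
      rw [← hqrch]
      exact E_comp hfs hreach hq.mem
    have hlangB : lang Fr adj B = lang Fr adj A := by
      unfold lang
      rw [← hqrch, Category.assoc, hq.isHom.ho]
    obtain ⟨h, hh, -⟩ := huniv B hBreach hlangB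
    obtain ⟨k, -, kuniq⟩ := huniv A hreach rfl
    have hid : IsAutHom A A (𝟙 A.Q.a) := ⟨by simp, Category.comp_id _, Category.id_comp _⟩
    have hqh : IsAutHom A A (q ≫ h) := by
      refine ⟨?_, ?_, ?_⟩
      · rw [Sg.map_comp, Category.assoc, hh.alg, ← Category.assoc, hq.isHom.alg,
          Category.assoc]
      · rw [← Category.assoc, hq.isHom.hi, hh.hi]
      · rw [Category.assoc, hh.ho, hq.isHom.ho]
    have h1 : q ≫ h = 𝟙 _ := (kuniq _ hqh).trans (kuniq _ hid).symm
    have h2 : h ≫ q = 𝟙 _ := by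
      haveI := hq.epi
      rw [← cancel_epi q, ← Category.assoc, h1, Category.id_comp, Category.comp_id]
    exact ⟨⟨h, h1, h2⟩⟩
  · rintro ⟨hsimple, hreach⟩
    refine ⟨hreach, ?_⟩
    intro B hBreach hlangB
    obtain ⟨h, hh⟩ := exists_hom_of_simple Fr adj hfs hE hpres A B hreach hBreach hlangB hsimple
    refine ⟨h, hh, ?_⟩
    intro h' hh'
    have e1 : rch Fr adj B ≫ h' = rch Fr adj A := rch_hom Fr adj B A h' hh'.alg hh'.hi
    have e2 : rch Fr adj B ≫ h = rch Fr adj A := rch_hom Fr adj B A h hh.alg hh.hi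
    haveI := hE _ hBreach
    exact (cancel_epi (rch Fr adj B)).mp (e1.trans e2.symm)


end TreeAutPaper
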